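/- For every real number λ with 5/6 < λ < 6/5, there exists a real number a such that 1/(2−λ) < a, 1/(2λ−1) < a, 2(λ+1)/(4λ−1−λ²) + 1/(λ−2) < a, 2(λ+1)/(4λ−1−λ²) + 1/(1−2λ) < a, and a < 3/2, a < 3/(2λ). (Note that for such λ one has 1/2 < λ < 2 and 4λ−1−λ² > 0, so all the displayed expressions are well defined.) -/

import Mathlib

set_option maxHeartbeats 1000000


theorem stmt_3 (l : ℝ) (h1 : 5 / 6 < l) (h2 : l < 6 / 5) :
    ∃ a : ℝ,
      1 / (2 - l) < a ∧
      1 / (2 * l - 1) < a ∧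
      2 * (l + 1) / (4 * l - 1 - l ^ 2) + 1 / (l - 2) < a ∧
      2 * (l + 1) / (4 * l - 1 - l ^ 2) + 1 / (1 - 2 * l) < a ∧
      a < 3 / 2 ∧ a < 3 / (2 * l) := by
  have hl0 : (0:ℝ) < l := by linarith
  have h2l : (0:ℝ) < 2 * l := by linarith
  have hd1 : (0:ℝ) < 2 - l := by linarith
  have hd2 : (0:ℝ) < 2 * l - 1 := by linarith
  have hd3 : (0:ℝ) < 4 * l - 1 - l ^ 2 := by nlinarith
  have hn1 : l - 2 ≠ 0 := by intro h; linarith [sub_eq_zero.mp h]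
  have hn2 : 1 - 2 * l ≠ 0 := by intro h; nlinarith
  set b1 : ℝ := 1 / (2 - l) with hb1
  set b2 : ℝ := 1 / (2 * l - 1) with hb2
  set b3 : ℝ := 2 * (l + 1) / (4 * l - 1 - l ^ 2) + 1 / (l - 2) with hb3
  set b4 : ℝ := 2 * (l + 1) / (4 * l - 1 - l ^ 2) + 1 / (1 - 2 * l) with hb4
  have e3 : b3 = (-(2 * (l + 1) * (l - 2)) - (4 * l - 1 - l ^ 2)) /
      ((4 * l - 1 - l ^ 2) * (2 - l)) := by
    rw [hb3, div_add_div _ _ hd3.ne' hn1, div_eq_div_iff (mul_ne_zero hd3.ne' hn1) (mul_ne_zero hd3.ne' hd1.ne')]; ring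
  have e4 : b4 = (-(2 * (l + 1) * (1 - 2 * l)) - (4 * l - 1 - l ^ 2)) /
      ((4 * l - 1 - l ^ 2) * (2 * l - 1)) := by
    rw [hb4, div_add_div _ _ hd3.ne' hn2, div_eq_div_iff (mul_ne_zero hd3.ne' hn2) (mul_ne_zero hd3.ne' hd2.ne')]; ring
  have h1a : b1 < 3 / 2 := by rw [hb1, div_lt_iff₀ hd1]; nlinarith
  have h1b : b1 < 3 / (2 * l) := by rw [hb1, div_lt_div_iff₀ hd1 h2l]; nlinarith
  have h2a : b2 < 3 / 2 := by rw [hb2, div_lt_iff₀ hd2]; nlinarith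
  have h2b : b2 < 3 / (2 * l) := by rw [hb2, div_lt_div_iff₀ hd2 h2l]; nlinarith
  have h3a : b3 < 3 / 2 := by
    rw [e3, div_lt_iff₀ (mul_pos hd3 hd1)]
    nlinarith [mul_pos (by linarith : (0:ℝ) < 6/5 - l) (by linarith : (0:ℝ) < l - 5/6),
      sq_nonneg (l - 1), mul_pos hd1 hd2, mul_pos (mul_pos hd1 hd2) hl0, sq_nonneg l, mul_pos h2l hd3]
  have h3b : b3 < 3 / (2 * l) := by
    rw [e3, div_lt_div_iff₀ (mul_pos hd3 hd1) h2l]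
    nlinarith [mul_pos (by linarith : (0:ℝ) < 6/5 - l) (by linarith : (0:ℝ) < l - 5/6),
      sq_nonneg (l - 1), mul_pos hd1 hd2, mul_pos (mul_pos hd1 hd2) hl0, sq_nonneg l, mul_pos h2l hd3]
  have h4a : b4 < 3 / 2 := by
    rw [e4, div_lt_iff₀ (mul_pos hd3 hd2)]
    nlinarith [mul_pos (by linarith : (0:ℝ) < 6/5 - l) (by linarith : (0:ℝ) < l - 5/6),
      sq_nonneg (l - 1), mul_pos hd1 hd2, mul_pos (mul_pos hd1 hd2) hl0, sq_nonneg l, mul_pos h2l hd3]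
  have h4b : b4 < 3 / (2 * l) := by
    rw [e4, div_lt_div_iff₀ (mul_pos hd3 hd2) h2l]
    nlinarith [mul_pos (by linarith : (0:ℝ) < 6/5 - l) (by linarith : (0:ℝ) < l - 5/6),
      sq_nonneg (l - 1), mul_pos hd1 hd2, mul_pos (mul_pos hd1 hd2) hl0, sq_nonneg l, mul_pos h2l hd3]
  set M : ℝ := min (3 / 2) (3 / (2 * l)) with hM
  set B : ℝ := max (max b1 b2) (max b3 b4) with hB
  have hBM : B < M := by
    apply max_lt (max_lt _ _) (max_lt _ _) <;> exact lt_min (by assumption) (by assumption)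
  have hmid1 : B < (B + M) / 2 := by linarith
  have hmid2 : (B + M) / 2 < M := by linarith
  refine ⟨(B + M) / 2, ?_, ?_, ?_, ?_, ?_, ?_⟩
  · exact lt_of_le_of_lt (le_max_of_le_left (le_max_left b1 b2)) hmid1
  · exact lt_of_le_of_lt (le_max_of_le_left (le_max_right b1 b2)) hmid1
  · exact lt_of_le_of_lt (le_max_of_le_right (le_max_left b3 b4)) hmid1
  · exact lt_of_le_of_lt (le_max_of_le_right (le_max_right b3 b4)) hmid1
  · exact lt_of_lt_of_le hmid2 (min_le_left _ _)
  · exact lt_of_lt_of_le hmid2 (min_le_right _ _)
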